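/- arXiv:2506.04026 — 4 statements merged into one kernel-verified Lean document; each statement's English description precedes it below -/
import Mathlib

section
/- Let D be an m×m symmetric real matrix, b, u ∈ ℝ^m, a, c, κ ∈ ℝ, and suppose the symmetric matrix M := [[a, bᵀ], [b, D]] is positive definite. Let w := (c, u) ∈ ℝ^{m+1} be the vector with first coordinate c followed by u. Then κ − wᵀ M⁻¹ w ≤ κ − uᵀ D⁻¹ u, i.e., the posterior variance after adding a data point is at most the posterior variance before adding it. -/
open Matrix

/-- Monotonicity of the Gaussian-process posterior variance: if the bordered matrix
`M = [[a, bᵀ], [b, D]]` is positive definite, then the posterior variance after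
adding a data point is at most the posterior variance before adding it:
`κ - wᵀ M⁻¹ w ≤ κ - uᵀ D⁻¹ u` with `w = (c, u)`. -/
theorem posterior_variance_decreases
    {m : ℕ} (D : Matrix (Fin m) (Fin m) ℝ) (hD : D.IsSymm)
    (b u : Fin m → ℝ) (a c κ : ℝ)
    (hM : (Matrix.fromBlocks
        (Matrix.of (fun (_ : Fin 1) (_ : Fin 1) => a))
        (Matrix.of (fun (_ : Fin 1) (j : Fin m) => b j))
        (Matrix.of (fun (i : Fin m) (_ : Fin 1) => b i)) D).PosDef) :
    κ - (Sum.elim (fun _ : Fin 1 => c) u) ⬝ᵥ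
        ((Matrix.fromBlocks
            (Matrix.of (fun (_ : Fin 1) (_ : Fin 1) => a))
            (Matrix.of (fun (_ : Fin 1) (j : Fin m) => b j))
            (Matrix.of (fun (i : Fin m) (_ : Fin 1) => b i)) D)⁻¹ *ᵥ
          Sum.elim (fun _ : Fin 1 => c) u) ≤
      κ - u ⬝ᵥ (D⁻¹ *ᵥ u) := by
  set M := Matrix.fromBlocks
        (Matrix.of (fun (_ : Fin 1) (_ : Fin 1) => a))
        (Matrix.of (fun (_ : Fin 1) (j : Fin m) => b j))
        (Matrix.of (fun (i : Fin m) (_ : Fin 1) => b i)) D with hMdef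
  set w := Sum.elim (fun _ : Fin 1 => c) u with hwdef
  -- M is symmetric
  have hMsymm : M.IsSymm := by
    ext i j
    rcases i with i | i <;> rcases j with j | j <;>
      simp [hMdef, Matrix.fromBlocks, Matrix.transpose_apply, hD.apply]
  -- D is positive definite
  have hDpd : D.PosDef := by
    refine Matrix.posDef_iff_dotProduct_mulVec.mpr ⟨?_, fun y hy => ?_⟩
    · rw [Matrix.IsHermitian, Matrix.conjTranspose_eq_transpose_of_trivial]
      exact hD
    · have := (Matrix.posDef_iff_dotProduct_mulVec.mp hM).2 (x := Sum.elim (0 : Fin 1 → ℝ) y) (by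
        intro h
        apply hy
        ext i
        exact congrFun h (Sum.inr i))
      simpa [hMdef, Matrix.fromBlocks_mulVec, Matrix.mulVec_zero,
        sumElim_dotProduct_sumElim] using this
  have hDinv : D * D⁻¹ = 1 := Matrix.mul_nonsing_inv D hDpd.det_pos.ne'.isUnit
  have hMinv : M * M⁻¹ = 1 := Matrix.mul_nonsing_inv M hM.det_pos.ne'.isUnit
  set v : Fin m → ℝ := D⁻¹ *ᵥ u with hvdef
  set z : Fin 1 ⊕ Fin m → ℝ := M⁻¹ *ᵥ w with hzdef
  set v' : Fin 1 ⊕ Fin m → ℝ := Sum.elim (0 : Fin 1 → ℝ) v with hv'def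
  have hDv : D *ᵥ v = u := by
    rw [hvdef, Matrix.mulVec_mulVec, hDinv, Matrix.one_mulVec]
  have hMz : M *ᵥ z = w := by
    rw [hzdef, Matrix.mulVec_mulVec, hMinv, Matrix.one_mulVec]
  have hMv' : M *ᵥ v' = Sum.elim ((Matrix.of (fun (_ : Fin 1) (j : Fin m) => b j)) *ᵥ v) u := by
    rw [hv'def, hMdef, Matrix.fromBlocks_mulVec]
    simp [hDv]
  have hv'Mv' : v' ⬝ᵥ (M *ᵥ v') = v ⬝ᵥ u := by
    rw [hMv', hv'def, sumElim_dotProduct_sumElim, zero_dotProduct, zero_add]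
  have hv'w : v' ⬝ᵥ w = v ⬝ᵥ u := by
    rw [hv'def, hwdef, sumElim_dotProduct_sumElim, zero_dotProduct, zero_add]
  have hzMv' : z ⬝ᵥ (M *ᵥ v') = v ⬝ᵥ u := by
    rw [Matrix.dotProduct_mulVec, ← Matrix.mulVec_transpose, hMsymm, hMz,
      dotProduct_comm, hv'w]
  have hzMz : z ⬝ᵥ (M *ᵥ z) = w ⬝ᵥ z := by
    rw [hMz, dotProduct_comm]
  have key : 0 ≤ (v' - z) ⬝ᵥ (M *ᵥ (v' - z)) := by
    have := (Matrix.posSemidef_iff_dotProduct_mulVec.mp hM.posSemidef).2 (v' - z)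
    simpa using this
  have expand : (v' - z) ⬝ᵥ (M *ᵥ (v' - z))
      = v' ⬝ᵥ (M *ᵥ v') - v' ⬝ᵥ (M *ᵥ z) - z ⬝ᵥ (M *ᵥ v') + z ⬝ᵥ (M *ᵥ z) := by
    rw [Matrix.mulVec_sub, sub_dotProduct, dotProduct_sub, dotProduct_sub]
    ring
  have hv'Mz : v' ⬝ᵥ (M *ᵥ z) = v ⬝ᵥ u := by rw [hMz, hv'w]
  have huv : u ⬝ᵥ (D⁻¹ *ᵥ u) = v ⬝ᵥ u := by
    rw [← hvdef, dotProduct_comm]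
  rw [huv]
  have : v ⬝ᵥ u ≤ w ⬝ᵥ z := by
    rw [expand, hv'Mv', hv'Mz, hzMv', hzMz] at key
    linarith
  linarith
end

section
/- Let (X, Σ, μ) be a measure space with μ a probability measure. Let D be an m×m symmetric invertible real matrix, b ∈ ℝ^m with s := a − bᵀ D⁻¹ b ≠ 0 for a scalar a ∈ ℝ, and set M := [[a, bᵀ], [b, D]]. Let κ, c : X → ℝ and u : X → ℝ^m be measurable functions, and define σ²_A(x) := κ(x) − u(x)ᵀ D⁻¹ u(x) and σ²_{A∪i}(x) := κ(x) − w(x)ᵀ M⁻¹ w(x), where w(x) := (c(x), u(x)) ∈ ℝ^{m+1}. If σ²_A and x ↦ (c(x) − bᵀ D⁻¹ u(x))² are both μ-integrable, then σ²_{A∪i} is μ-integrable and ∫ σ²_{A∪i} dμ = ∫ σ²_A dμ − s⁻¹ ∫ (c(x) − bᵀ D⁻¹ u(x))² dμ(x). -/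
open Matrix MeasureTheory

lemma quad_form_update {m : ℕ} (D : Matrix (Fin m) (Fin m) ℝ) (hD : D.IsSymm)
    (hDinv : IsUnit D.det) (b : Fin m → ℝ) (a : ℝ)
    (hs : a - b ⬝ᵥ (D⁻¹ *ᵥ b) ≠ 0) (c : ℝ) (u : Fin m → ℝ) :
    (Sum.elim (fun _ : Fin 1 => c) u) ⬝ᵥ
        ((Matrix.fromBlocks
            (Matrix.of (fun (_ : Fin 1) (_ : Fin 1) => a))
            (Matrix.of (fun (_ : Fin 1) (j : Fin m) => b j))
            (Matrix.of (fun (i : Fin m) (_ : Fin 1) => b i)) D)⁻¹ *ᵥ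
          Sum.elim (fun _ : Fin 1 => c) u) =
      u ⬝ᵥ (D⁻¹ *ᵥ u) + (a - b ⬝ᵥ (D⁻¹ *ᵥ b))⁻¹ * (c - b ⬝ᵥ (D⁻¹ *ᵥ u)) ^ 2 := by
  set s := a - b ⬝ᵥ (D⁻¹ *ᵥ b) with hsdef
  letI : Invertible D := D.invertibleOfIsUnitDet hDinv
  have hiD : (⅟D : Matrix (Fin m) (Fin m) ℝ) = D⁻¹ := invOf_eq_nonsing_inv D
  have hE : (D⁻¹)ᵀ = D⁻¹ := by
    rw [Matrix.transpose_nonsing_inv, hD.eq]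
  have hsym : ∀ v w : Fin m → ℝ, v ⬝ᵥ (D⁻¹ *ᵥ w) = w ⬝ᵥ (D⁻¹ *ᵥ v) := by
    intro v w
    rw [Matrix.dotProduct_mulVec, ← Matrix.mulVec_transpose, hE, dotProduct_comm]
  set A := Matrix.of (fun (_ : Fin 1) (_ : Fin 1) => a) with hA
  set B := Matrix.of (fun (_ : Fin 1) (j : Fin m) => b j) with hB
  set C := Matrix.of (fun (i : Fin m) (_ : Fin 1) => b i) with hC
  have hS : A - B * ⅟D * C = Matrix.of (fun _ _ : Fin 1 => s) := by
    ext i j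
    fin_cases i; fin_cases j
    simp [hA, hB, hC, hiD, Matrix.mul_apply, Matrix.sub_apply, hsdef,
      dotProduct, Matrix.mulVec, Finset.mul_sum, Finset.sum_mul]
    rw [Finset.sum_comm]
    exact Finset.sum_congr rfl fun i _ => Finset.sum_congr rfl fun j _ => by ring
  letI iS : Invertible (A - B * ⅟D * C) := by
    rw [hS]
    exact ⟨Matrix.of (fun _ _ : Fin 1 => s⁻¹),
      by ext i j; fin_cases i; fin_cases j;
         simp [Matrix.mul_apply, inv_mul_cancel₀ hs],
      by ext i j; fin_cases i; fin_cases j;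
         simp [Matrix.mul_apply, mul_inv_cancel₀ hs]⟩
  have hiS : (⅟(A - B * ⅟D * C) : Matrix (Fin 1) (Fin 1) ℝ) =
      Matrix.of (fun _ _ : Fin 1 => s⁻¹) := by
    apply invOf_eq_right_inv
    rw [hS]
    ext i j; fin_cases i; fin_cases j
    simp [Matrix.mul_apply, mul_inv_cancel₀ hs]
  letI iM : Invertible (Matrix.fromBlocks A B C D) :=
    Matrix.fromBlocks₂₂Invertible A B C D
  have hMinv : (Matrix.fromBlocks A B C D)⁻¹ = ⅟(Matrix.fromBlocks A B C D) :=
    (invOf_eq_nonsing_inv _).symm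
  rw [hMinv, Matrix.invOf_fromBlocks₂₂_eq, hiS, hiD, Matrix.fromBlocks_mulVec,
    sumElim_dotProduct_sumElim]
  have hBv : ∀ v : Fin m → ℝ, B *ᵥ v = fun _ => b ⬝ᵥ v := fun v => rfl
  have hCv : ∀ w : Fin 1 → ℝ, C *ᵥ w = (w 0) • b := by
    intro w; ext i; simp [hC, Matrix.mulVec, dotProduct, mul_comm]
  have hSv : ∀ w : Fin 1 → ℝ, (Matrix.of fun _ _ : Fin 1 => s⁻¹) *ᵥ w =
      fun _ => s⁻¹ * w 0 := by
    intro w; ext i; simp [Matrix.mulVec, dotProduct]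
  simp only [Sum.elim_comp_inl, Sum.elim_comp_inr, ← Matrix.mulVec_mulVec,
    Matrix.neg_mulVec, Matrix.add_mulVec, dotProduct_add, dotProduct_neg,
    hBv, hCv, hSv, Matrix.mulVec_smul, dotProduct_smul, smul_eq_mul]
  rw [hsym u b]
  simp only [dotProduct, Fin.sum_univ_one]
  ring



/-- Iterative update of the Integrated Variance (Theorem 1): with
`M = [[a, bᵀ], [b, D]]`, `s = a - bᵀ D⁻¹ b ≠ 0`, posterior variances
`σ²_A(x) = κ(x) - u(x)ᵀ D⁻¹ u(x)` and `σ²_{A∪i}(x) = κ(x) - w(x)ᵀ M⁻¹ w(x)` with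
`w(x) = (c(x), u(x))`, if `σ²_A` and `x ↦ (c(x) - bᵀ D⁻¹ u(x))²` are integrable, then
`σ²_{A∪i}` is integrable and
`∫ σ²_{A∪i} dμ = ∫ σ²_A dμ - s⁻¹ ∫ (c(x) - bᵀ D⁻¹ u(x))² dμ(x)`. -/
theorem integrated_variance_update
    {X : Type*} [MeasurableSpace X] (μ : Measure X) [IsProbabilityMeasure μ]
    {m : ℕ} (D : Matrix (Fin m) (Fin m) ℝ) (hD : D.IsSymm) (hDinv : IsUnit D.det)
    (b : Fin m → ℝ) (a : ℝ)
    (hs : a - b ⬝ᵥ (D⁻¹ *ᵥ b) ≠ 0)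
    (κ c : X → ℝ) (u : X → Fin m → ℝ)
    (hκ : Measurable κ) (hc : Measurable c) (hu : Measurable u)
    (hIntA : Integrable (fun x => κ x - u x ⬝ᵥ (D⁻¹ *ᵥ u x)) μ)
    (hIntSq : Integrable (fun x => (c x - b ⬝ᵥ (D⁻¹ *ᵥ u x)) ^ 2) μ) :
    Integrable (fun x => κ x - (Sum.elim (fun _ : Fin 1 => c x) (u x)) ⬝ᵥ
        ((Matrix.fromBlocks
            (Matrix.of (fun (_ : Fin 1) (_ : Fin 1) => a))
            (Matrix.of (fun (_ : Fin 1) (j : Fin m) => b j))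
            (Matrix.of (fun (i : Fin m) (_ : Fin 1) => b i)) D)⁻¹ *ᵥ
          Sum.elim (fun _ : Fin 1 => c x) (u x))) μ ∧
      ∫ x, (κ x - (Sum.elim (fun _ : Fin 1 => c x) (u x)) ⬝ᵥ
        ((Matrix.fromBlocks
            (Matrix.of (fun (_ : Fin 1) (_ : Fin 1) => a))
            (Matrix.of (fun (_ : Fin 1) (j : Fin m) => b j))
            (Matrix.of (fun (i : Fin m) (_ : Fin 1) => b i)) D)⁻¹ *ᵥ
          Sum.elim (fun _ : Fin 1 => c x) (u x))) ∂μ =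
      ∫ x, (κ x - u x ⬝ᵥ (D⁻¹ *ᵥ u x)) ∂μ -
        (a - b ⬝ᵥ (D⁻¹ *ᵥ b))⁻¹ * ∫ x, (c x - b ⬝ᵥ (D⁻¹ *ᵥ u x)) ^ 2 ∂μ := by
  have hpt : ∀ x, κ x - (Sum.elim (fun _ : Fin 1 => c x) (u x)) ⬝ᵥ
      ((Matrix.fromBlocks
          (Matrix.of (fun (_ : Fin 1) (_ : Fin 1) => a))
          (Matrix.of (fun (_ : Fin 1) (j : Fin m) => b j))
          (Matrix.of (fun (i : Fin m) (_ : Fin 1) => b i)) D)⁻¹ *ᵥ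
        Sum.elim (fun _ : Fin 1 => c x) (u x)) =
      (κ x - u x ⬝ᵥ (D⁻¹ *ᵥ u x)) -
        (a - b ⬝ᵥ (D⁻¹ *ᵥ b))⁻¹ * (c x - b ⬝ᵥ (D⁻¹ *ᵥ u x)) ^ 2 := by
    intro x
    rw [quad_form_update D hD hDinv b a hs (c x) (u x)]
    ring
  have hInt : Integrable (fun x => (κ x - u x ⬝ᵥ (D⁻¹ *ᵥ u x)) -
      (a - b ⬝ᵥ (D⁻¹ *ᵥ b))⁻¹ * (c x - b ⬝ᵥ (D⁻¹ *ᵥ u x)) ^ 2) μ :=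
    hIntA.sub (hIntSq.const_mul _)
  constructor
  · exact hInt.congr (Filter.Eventually.of_forall fun x => (hpt x).symm)
  · calc ∫ x, (κ x - (Sum.elim (fun _ : Fin 1 => c x) (u x)) ⬝ᵥ
        ((Matrix.fromBlocks
            (Matrix.of (fun (_ : Fin 1) (_ : Fin 1) => a))
            (Matrix.of (fun (_ : Fin 1) (j : Fin m) => b j))
            (Matrix.of (fun (i : Fin m) (_ : Fin 1) => b i)) D)⁻¹ *ᵥ
          Sum.elim (fun _ : Fin 1 => c x) (u x))) ∂μ
        = ∫ x, ((κ x - u x ⬝ᵥ (D⁻¹ *ᵥ u x)) -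
            (a - b ⬝ᵥ (D⁻¹ *ᵥ b))⁻¹ * (c x - b ⬝ᵥ (D⁻¹ *ᵥ u x)) ^ 2) ∂μ := by
          exact integral_congr_ae (Filter.Eventually.of_forall hpt)
      _ = ∫ x, (κ x - u x ⬝ᵥ (D⁻¹ *ᵥ u x)) ∂μ -
            (a - b ⬝ᵥ (D⁻¹ *ᵥ b))⁻¹ * ∫ x, (c x - b ⬝ᵥ (D⁻¹ *ᵥ u x)) ^ 2 ∂μ := by
          rw [integral_sub hIntA (hIntSq.const_mul _), integral_const_mul]
end

section
/- Let (X, Σ, μ) be a probability measure space, let the (m+1)×(m+1) symmetric matrix M := [[a, bᵀ], [b, D]] be positive definite, and let κ, c : X → ℝ and u : X → ℝ^m be measurable with σ²_A(x) := κ(x) − u(x)ᵀ D⁻¹ u(x) and σ²_{A∪i}(x) := κ(x) − (c(x), u(x))ᵀ M⁻¹ (c(x), u(x)) both μ-integrable. Then ∫ σ²_{A∪i} dμ ≤ ∫ σ²_A dμ, i.e., the Integrated Variance does not increase when a data point is added to the training set. -/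
open Matrix MeasureTheory

lemma quad_inv_lower_bound {n : Type*} [Fintype n] [DecidableEq n]
    (M : Matrix n n ℝ) (hM : M.PosDef) (w z : n → ℝ) :
    2 * (z ⬝ᵥ w) - z ⬝ᵥ (M *ᵥ z) ≤ w ⬝ᵥ (M⁻¹ *ᵥ w) := by
  have hinv : M * M⁻¹ = 1 := Matrix.mul_nonsing_inv M hM.det_pos.ne'.isUnit
  have hMw : M *ᵥ (M⁻¹ *ᵥ w) = w := by rw [mulVec_mulVec, hinv, one_mulVec]
  have hsym : Mᵀ = M := hM.isHermitian.eq
  have h0 := (posSemidef_iff_dotProduct_mulVec.mp hM.posSemidef).2 (z - M⁻¹ *ᵥ w)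
  simp only [star_trivial] at h0
  have hexp : (z - M⁻¹ *ᵥ w) ⬝ᵥ M *ᵥ (z - M⁻¹ *ᵥ w)
      = z ⬝ᵥ (M *ᵥ z) - 2 * (z ⬝ᵥ w) + w ⬝ᵥ (M⁻¹ *ᵥ w) := by
    rw [mulVec_sub, dotProduct_sub, sub_dotProduct, sub_dotProduct, hMw]
    have h1 : (M⁻¹ *ᵥ w) ⬝ᵥ (M *ᵥ z) = w ⬝ᵥ z := by
      rw [dotProduct_mulVec, ← mulVec_transpose, hsym, hMw]
    rw [h1, dotProduct_comm z w, dotProduct_comm (M⁻¹ *ᵥ w) w]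
    ring
  rw [hexp] at h0
  linarith

/-- The Integrated Variance does not increase when a data point is added to the
training set: if `M = [[a, bᵀ], [b, D]]` is positive definite and the posterior
variances `σ²_A(x) = κ(x) - u(x)ᵀ D⁻¹ u(x)` and
`σ²_{A∪i}(x) = κ(x) - (c(x), u(x))ᵀ M⁻¹ (c(x), u(x))` are integrable, then
`∫ σ²_{A∪i} dμ ≤ ∫ σ²_A dμ`. -/
theorem integrated_variance_antitone
    {X : Type*} [MeasurableSpace X] (μ : Measure X) [IsProbabilityMeasure μ]
    {m : ℕ} (D : Matrix (Fin m) (Fin m) ℝ) (hD : D.IsSymm)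
    (b : Fin m → ℝ) (a : ℝ)
    (hM : (Matrix.fromBlocks
        (Matrix.of (fun (_ : Fin 1) (_ : Fin 1) => a))
        (Matrix.of (fun (_ : Fin 1) (j : Fin m) => b j))
        (Matrix.of (fun (i : Fin m) (_ : Fin 1) => b i)) D).PosDef)
    (κ c : X → ℝ) (u : X → Fin m → ℝ)
    (hκ : Measurable κ) (hc : Measurable c) (hu : Measurable u)
    (hIntA : Integrable (fun x => κ x - u x ⬝ᵥ (D⁻¹ *ᵥ u x)) μ)
    (hIntAi : Integrable (fun x => κ x - (Sum.elim (fun _ : Fin 1 => c x) (u x)) ⬝ᵥ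
        ((Matrix.fromBlocks
            (Matrix.of (fun (_ : Fin 1) (_ : Fin 1) => a))
            (Matrix.of (fun (_ : Fin 1) (j : Fin m) => b j))
            (Matrix.of (fun (i : Fin m) (_ : Fin 1) => b i)) D)⁻¹ *ᵥ
          Sum.elim (fun _ : Fin 1 => c x) (u x))) μ) :
    ∫ x, (κ x - (Sum.elim (fun _ : Fin 1 => c x) (u x)) ⬝ᵥ
        ((Matrix.fromBlocks
            (Matrix.of (fun (_ : Fin 1) (_ : Fin 1) => a))
            (Matrix.of (fun (_ : Fin 1) (j : Fin m) => b j))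
            (Matrix.of (fun (i : Fin m) (_ : Fin 1) => b i)) D)⁻¹ *ᵥ
          Sum.elim (fun _ : Fin 1 => c x) (u x))) ∂μ ≤
      ∫ x, (κ x - u x ⬝ᵥ (D⁻¹ *ᵥ u x)) ∂μ := by
  set M := Matrix.fromBlocks
      (Matrix.of (fun (_ : Fin 1) (_ : Fin 1) => a))
      (Matrix.of (fun (_ : Fin 1) (j : Fin m) => b j))
      (Matrix.of (fun (i : Fin m) (_ : Fin 1) => b i)) D with hMdef
  -- D is positive definite
  have hDpd : D.PosDef := by
    refine posDef_iff_dotProduct_mulVec.mpr ⟨?_, ?_⟩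
    · exact hD
    · intro y hy
      have hne : (Sum.elim (0 : Fin 1 → ℝ) y) ≠ 0 := by
        intro h
        apply hy
        funext j
        have := congrFun h (Sum.inr j)
        simpa using this
      have := (posDef_iff_dotProduct_mulVec.mp hM).2 (x := Sum.elim (0 : Fin 1 → ℝ) y) hne
      simp only [star_trivial, hMdef, fromBlocks_mulVec, sumElim_dotProduct_sumElim,
        Sum.elim_comp_inl, Sum.elim_comp_inr,
        mulVec_zero, zero_add, zero_dotProduct, add_zero] at this ⊢
      convert this using 2
  have hDinv : D * D⁻¹ = 1 := Matrix.mul_nonsing_inv D hDpd.det_pos.ne'.isUnit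
  apply integral_mono hIntAi hIntA
  intro x
  simp only
  have key : u x ⬝ᵥ (D⁻¹ *ᵥ u x) ≤
      (Sum.elim (fun _ : Fin 1 => c x) (u x)) ⬝ᵥ (M⁻¹ *ᵥ Sum.elim (fun _ : Fin 1 => c x) (u x)) := by
    have h := quad_inv_lower_bound M hM (Sum.elim (fun _ : Fin 1 => c x) (u x))
      (Sum.elim (0 : Fin 1 → ℝ) (D⁻¹ *ᵥ u x))
    have h1 : Sum.elim (0 : Fin 1 → ℝ) (D⁻¹ *ᵥ u x) ⬝ᵥ Sum.elim (fun _ : Fin 1 => c x) (u x)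
        = u x ⬝ᵥ (D⁻¹ *ᵥ u x) := by
      rw [sumElim_dotProduct_sumElim, zero_dotProduct, zero_add,
        dotProduct_comm]
    have h2 : Sum.elim (0 : Fin 1 → ℝ) (D⁻¹ *ᵥ u x) ⬝ᵥ (M *ᵥ Sum.elim (0 : Fin 1 → ℝ) (D⁻¹ *ᵥ u x))
        = u x ⬝ᵥ (D⁻¹ *ᵥ u x) := by
      rw [hMdef, fromBlocks_mulVec, sumElim_dotProduct_sumElim]
      simp only [Sum.elim_comp_inl, Sum.elim_comp_inr, mulVec_zero, zero_add, zero_dotProduct]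
      rw [mulVec_mulVec, hDinv, one_mulVec, dotProduct_comm]
    rw [h1, h2] at h
    linarith
  linarith
end

section
/- Let K be an n×n real symmetric positive definite matrix and let F be an n×p real matrix with p ≤ n whose columns are linearly independent (rank F = p). Then the (n+p)×(n+p) block matrix [[K, F], [Fᵀ, 0]] is invertible. -/
open Matrix

lemma aux_ker_bot {n p : ℕ} (F : Matrix (Fin n) (Fin p) ℝ) (hF : F.rank = p)
    (y : Fin p → ℝ) (hy : F *ᵥ y = 0) : y = 0 := by
  have h1 := LinearMap.finrank_range_add_finrank_ker (F.mulVecLin)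
  rw [show Module.finrank ℝ ↥(LinearMap.range F.mulVecLin) = F.rank from rfl, hF] at h1
  simp only [Module.finrank_fin_fun] at h1
  have hker : Module.finrank ℝ ↥(LinearMap.ker F.mulVecLin) = 0 := by omega
  have hbot : LinearMap.ker F.mulVecLin = ⊥ := Submodule.finrank_eq_zero.mp hker
  have hy' : y ∈ LinearMap.ker F.mulVecLin := by
    simpa [Matrix.mulVecLin] using hy
  rw [hbot] at hy'
  simpa using hy'

/-- The Universal Kriging system matrix is invertible: if `K` is symmetric positive
definite and `F` has full column rank `p ≤ n`, then the bordered block matrix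
`[[K, F], [Fᵀ, 0]]` is invertible. -/
theorem kriging_system_invertible
    {n p : ℕ} (hpn : p ≤ n)
    (K : Matrix (Fin n) (Fin n) ℝ) (hK : K.PosDef)
    (F : Matrix (Fin n) (Fin p) ℝ) (hF : F.rank = p) :
    IsUnit (Matrix.fromBlocks K F Fᵀ (0 : Matrix (Fin p) (Fin p) ℝ)).det := by
  rw [isUnit_iff_ne_zero]
  intro hdet
  obtain ⟨v, hv, hMv⟩ := Matrix.exists_mulVec_eq_zero_iff.mpr hdet
  set x : Fin n → ℝ := v ∘ Sum.inl with hx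
  set y : Fin p → ℝ := v ∘ Sum.inr with hyy
  rw [Matrix.fromBlocks_mulVec] at hMv
  have h1 : ∀ i, (K *ᵥ x + F *ᵥ y) i = 0 := fun i => by
    have := congrFun hMv (Sum.inl i)
    simpa [hx, hyy] using this
  have h2 : ∀ j, (Fᵀ *ᵥ x) j = 0 := fun j => by
    have := congrFun hMv (Sum.inr j)
    simpa [hx, hyy] using this
  have h1' : K *ᵥ x + F *ᵥ y = 0 := funext h1
  have h2' : Fᵀ *ᵥ x = 0 := funext h2
  -- x ⬝ᵥ K x = 0
  have hdot : x ⬝ᵥ (K *ᵥ x) + x ⬝ᵥ (F *ᵥ y) = 0 := by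
    rw [← dotProduct_add, h1', dotProduct_zero]
  have hFy : x ⬝ᵥ (F *ᵥ y) = 0 := by
    rw [dotProduct_mulVec, ← Matrix.mulVec_transpose, h2', zero_dotProduct]
  have hKx : x ⬝ᵥ (K *ᵥ x) = 0 := by linarith [hdot, hFy]
  have hx0 : x = 0 := by
    by_contra hx0
    have := hK.dotProduct_mulVec_pos hx0
    simp only [RCLike.star_def, star_trivial] at this
    -- over ℝ, star is identity
    have : (0:ℝ) < x ⬝ᵥ (K *ᵥ x) := by simpa using this
    linarith
  have hFy0 : F *ᵥ y = 0 := by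
    rw [hx0] at h1'
    simpa using h1'
  have hy0 : y = 0 := aux_ker_bot F hF y hFy0
  apply hv
  funext i
  cases i with
  | inl i => exact congrFun hx0 i
  | inr j => exact congrFun hy0 j
end
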